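/- If h is a rim-hook of a partition λ and u ∈ h is a cell with u ∈ I ∪ A, then the East neighbour e u also belongs to h; if u ∈ h with u ∈ B ∪ I, then the South neighbour s u also belongs to h. -/

import Mathlib

abbrev Cell := ℕ × ℕ

def nC (u : Cell) : Cell := (u.1 - 1, u.2)
def eC (u : Cell) : Cell := (u.1, u.2 + 1)
def sC (u : Cell) : Cell := (u.1 + 1, u.2)
def wC (u : Cell) : Cell := (u.1, u.2 - 1)
def seC (u : Cell) : Cell := (u.1 + 1, u.2 + 1)

/-- `lam i` is the `i`-th part (1-indexed); weakly decreasing with finitely many nonzero parts. -/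
def IsPartition (lam : ℕ → ℕ) : Prop :=
  (∀ i, lam (i + 1) ≤ lam i) ∧ (∃ N, ∀ i, N ≤ i → lam i = 0)

/-- The Young diagram of `lam`: cells `(i,j)` with `1 ≤ i`, `1 ≤ j ≤ lam i`. -/
def cells (lam : ℕ → ℕ) : Set Cell := {u | 1 ≤ u.1 ∧ 1 ≤ u.2 ∧ u.2 ≤ lam u.1}

/-- The conjugate partition. -/
noncomputable def conj (lam : ℕ → ℕ) (j : ℕ) : ℕ := {i | 1 ≤ i ∧ j ≤ lam i}.ncard

def content (u : Cell) : ℤ := (u.2 : ℤ) - (u.1 : ℤ)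

/-- Hook length of the cell `u = (i,j)`: `lam i + lam' j - i - j + 1`. -/
noncomputable def hookLen (lam : ℕ → ℕ) (u : Cell) : ℕ := lam u.1 + conj lam u.2 - u.1 - u.2 + 1

/-- A North-East path in `lam`. -/
def IsNEPath (lam : ℕ → ℕ) (P : List Cell) : Prop :=
  P ≠ [] ∧ (∀ u ∈ P, u ∈ cells lam) ∧ List.Chain' (fun u v => v = nC u ∨ v = eC u) P

/-- Head of a path. -/
def hd (P : List Cell) : Cell := P.headD (0, 0)
/-- Tail (last cell) of a path. -/
def lst (P : List Cell) : Cell := P.getLastD (0, 0)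
/-- Length of a path (number of steps). -/
def len (P : List Cell) : ℕ := P.length - 1

/-- A rim-hook of `lam`. -/
def IsRimHook (lam : ℕ → ℕ) (h : List Cell) : Prop :=
  IsNEPath lam h ∧ sC (hd h) ∉ cells lam ∧ eC (lst h) ∉ cells lam ∧
    ∀ u ∈ h, seC u ∉ cells lam

def IsOuterCorner (lam : ℕ → ℕ) (u : Cell) : Prop :=
  u ∈ cells lam ∧ eC u ∉ cells lam ∧ sC u ∉ cells lam

def IsInnerCorner (lam : ℕ → ℕ) (u : Cell) : Prop :=
  u ∈ cells lam ∧ eC u ∈ cells lam ∧ sC u ∈ cells lam ∧ seC u ∉ cells lam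

def IsCornerContent (lam : ℕ → ℕ) (z : ℤ) : Prop :=
  ∃ v, (IsInnerCorner lam v ∨ IsOuterCorner lam v) ∧ content v = z

/-- Cells whose content is the content of an inner corner. -/
def regionI (lam : ℕ → ℕ) : Set Cell :=
  {u ∈ cells lam | ∃ v, IsInnerCorner lam v ∧ content v = content u}

/-- Cells whose content is the content of an outer corner. -/
def regionO (lam : ℕ → ℕ) : Set Cell :=
  {u ∈ cells lam | ∃ v, IsOuterCorner lam v ∧ content v = content u}

/-- Cells with `c(u) < o_1` or `i_k < c(u) < o_{k+1}`: the content is not a corner content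
and the largest corner content below it (if any) is an inner-corner content. -/
def regionA (lam : ℕ → ℕ) : Set Cell :=
  {u ∈ cells lam | ¬ IsCornerContent lam (content u) ∧
    ∀ w, IsOuterCorner lam w → content w < content u →
      ∃ v, IsInnerCorner lam v ∧ content w < content v ∧ content v < content u}

/-- Cells with `o_k < c(u) < i_k` or `o_{r+1} < c(u)`: the remaining cells. -/
def regionB (lam : ℕ → ℕ) : Set Cell :=
  cells lam \ (regionI lam ∪ regionO lam ∪ regionA lam)

/-- A reverse plane partition of shape `lam`, as a function vanishing outside `lam`
which is weakly increasing along rows and columns. -/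
def IsRPP (lam : ℕ → ℕ) (π : Cell → ℕ) : Prop :=
  (∀ u, u ∉ cells lam → π u = 0) ∧
  (∀ u ∈ cells lam, eC u ∈ cells lam → π u ≤ π (eC u)) ∧
  (∀ u ∈ cells lam, sC u ∈ cells lam → π u ≤ π (sC u))

/-- `π + P`: increase by one along the path. -/
def addPath (π : Cell → ℕ) (P : List Cell) : Cell → ℕ :=
  fun u => if u ∈ P then π u + 1 else π u

/-- `π - P`: decrease by one along the path. -/
def subPath (π : Cell → ℕ) (P : List Cell) : Cell → ℕ :=
  fun u => if u ∈ P then π u - 1 else π u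

/-- The path `P` is `π`-compatible. -/
def Compatible (lam : ℕ → ℕ) (π : Cell → ℕ) (P : List Cell) : Prop :=
  (∀ u ∈ P, u ∈ regionI lam ∪ regionA lam → eC u ∈ P ∧ π (eC u) = π u) ∧
  (∀ u ∈ P, nC u ∈ P → π (nC u) = π u)

/-- `P` witnesses the insertion of the rim-hook `h` into `π`. -/
def InsertPath (lam : ℕ → ℕ) (π : Cell → ℕ) (h P : List Cell) : Prop :=
  IsNEPath lam P ∧ Compatible lam π P ∧ lst P = lst h ∧ len P = len h ∧
    IsRPP lam (addPath π P)

/-- The rim-hook `h` inserts into `π`. -/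
def Inserts (lam : ℕ → ℕ) (h : List Cell) (π : Cell → ℕ) : Prop :=
  ∃ P, InsertPath lam π h P

open Classical in
/-- `h * π`, the insertion of `h` into `π` (equal to `π` if `h` does not insert). -/
noncomputable def insertRH (lam : ℕ → ℕ) (h : List Cell) (π : Cell → ℕ) : Cell → ℕ :=
  if hP : Inserts lam h π then addPath π hP.choose else π

/-- `h₁ * h₂ * ⋯ * h_s * 0`. -/
noncomputable def insertList (lam : ℕ → ℕ) (hs : List (List Cell)) : Cell → ℕ :=
  hs.foldr (insertRH lam) (fun _ => 0)

/-- Reverse lexicographic order on rim-hooks. -/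
def RHle (f h : List Cell) : Prop :=
  content (hd h) < content (hd f) ∨
    (content (hd f) = content (hd h) ∧ content (lst f) ≤ content (lst h))

/-- Reverse lexicographic order on cells. -/
def revlexLE (u v : Cell) : Prop := v.2 < u.2 ∨ (u.2 = v.2 ∧ v.1 ≤ u.1)

/-- Content order on cells: `u ⊴ v`. -/
def contentLE (u v : Cell) : Prop :=
  content v < content u ∨ (content u = content v ∧ v.1 ≤ u.1)

/-- The set of candidates of `π`. -/
def candidates (lam : ℕ → ℕ) (π : Cell → ℕ) : Set Cell :=
  {u ∈ regionO lam | π (wC u) < π u} ∪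
    {u ∈ regionA lam | π (wC u) < π u ∧ π (nC u) < π u}

/-- One step of the path `Q(π,u)`. -/
def QStep (lam : ℕ → ℕ) (π : Cell → ℕ) (v v' : Cell) : Prop :=
  (v ∈ regionO lam ∪ regionB lam ∧ π (nC v) = π v ∧ v' = nC v) ∨
  ((v ∈ regionI lam ∪ regionA lam ∨ (π (nC v) < π v ∧ eC v ∈ cells lam)) ∧ v' = eC v)

/-- `P` is the path `Q(π,u)`: starts at `u`, follows the `Q`-steps, and terminates
when `π(n v) < π(v)` and `e v ∉ lam`. -/
def IsQPath (lam : ℕ → ℕ) (π : Cell → ℕ) (u : Cell) (P : List Cell) : Prop :=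
  P ≠ [] ∧ (∀ v ∈ P, v ∈ cells lam) ∧ hd P = u ∧ List.Chain' (QStep lam π) P ∧
    π (nC (lst P)) < π (lst P) ∧ eC (lst P) ∉ cells lam


section Helpers

lemma lam_anti {lam : ℕ → ℕ} (hlam : IsPartition lam) {a b : ℕ} (hab : a ≤ b) :
    lam b ≤ lam a :=
  antitone_nat_of_succ_le hlam.1 hab

lemma mem_cells_iff {lam : ℕ → ℕ} {u : Cell} :
    u ∈ cells lam ↔ 1 ≤ u.1 ∧ 1 ≤ u.2 ∧ u.2 ≤ lam u.1 := Iff.rfl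

lemma mem_cells_mk {lam : ℕ → ℕ} {i j : ℕ} :
    ((i, j) : Cell) ∈ cells lam ↔ 1 ≤ i ∧ 1 ≤ j ∧ j ≤ lam i := Iff.rfl

lemma cells_e {lam : ℕ → ℕ} {u : Cell} :
    eC u ∈ cells lam ↔ 1 ≤ u.1 ∧ 1 ≤ u.2 + 1 ∧ u.2 + 1 ≤ lam u.1 := Iff.rfl

lemma cells_s {lam : ℕ → ℕ} {u : Cell} :
    sC u ∈ cells lam ↔ 1 ≤ u.1 + 1 ∧ 1 ≤ u.2 ∧ u.2 ≤ lam (u.1 + 1) := Iff.rfl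

lemma cells_se {lam : ℕ → ℕ} {u : Cell} :
    seC u ∈ cells lam ↔ 1 ≤ u.1 + 1 ∧ 1 ≤ u.2 + 1 ∧ u.2 + 1 ≤ lam (u.1 + 1) := Iff.rfl

lemma cells_e_mk {lam : ℕ → ℕ} {i j : ℕ} :
    eC (i, j) ∈ cells lam ↔ 1 ≤ i ∧ 1 ≤ j + 1 ∧ j + 1 ≤ lam i := Iff.rfl

lemma cells_s_mk {lam : ℕ → ℕ} {i j : ℕ} :
    sC (i, j) ∈ cells lam ↔ 1 ≤ i + 1 ∧ 1 ≤ j ∧ j ≤ lam (i + 1) := Iff.rfl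

lemma cells_se_mk {lam : ℕ → ℕ} {i j : ℕ} :
    seC (i, j) ∈ cells lam ↔ 1 ≤ i + 1 ∧ 1 ≤ j + 1 ∧ j + 1 ≤ lam (i + 1) := Iff.rfl

lemma content_eq {u : Cell} : content u = (u.2 : ℤ) - (u.1 : ℤ) := rfl

lemma content_mk {i j : ℕ} : content ((i, j) : Cell) = (j : ℤ) - (i : ℤ) := rfl

/-- On a diagonal, every cell is weakly NW of a rim cell. -/
lemma rim_row_le {lam : ℕ → ℕ} (hlam : IsPartition lam) {u v : Cell}
    (hu : u ∈ cells lam) (hru : seC u ∉ cells lam)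
    (hv : v ∈ cells lam) (hc : content v = content u) : v.1 ≤ u.1 := by
  by_contra hlt
  push_neg at hlt
  apply hru
  rw [mem_cells_iff] at hv
  rw [cells_se]
  rw [content_eq, content_eq] at hc
  have h1 : lam v.1 ≤ lam (u.1 + 1) := lam_anti hlam hlt
  exact ⟨by omega, by omega, by omega⟩

/-- Each diagonal has at most one rim cell. -/
lemma rim_unique {lam : ℕ → ℕ} (hlam : IsPartition lam) {u v : Cell}
    (hu : u ∈ cells lam) (hru : seC u ∉ cells lam)
    (hv : v ∈ cells lam) (hrv : seC v ∉ cells lam)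
    (hc : content v = content u) : v = u := by
  have h1 := rim_row_le hlam hu hru hv hc
  have h2 := rim_row_le hlam hv hrv hu hc.symm
  rw [content_eq, content_eq] at hc
  have e1 : v.1 = u.1 := le_antisymm h1 h2
  have e2 : v.2 = u.2 := by omega
  exact Prod.ext e1 e2

/-- An outer corner is a rim cell. -/
lemma outer_rim {lam : ℕ → ℕ} {v : Cell} (hv : IsOuterCorner lam v) :
    seC v ∉ cells lam := by
  obtain ⟨h1, _, h3⟩ := hv
  rw [mem_cells_iff] at h1
  rw [cells_s] at h3
  rw [cells_se]
  push_neg at h3 ⊢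
  intro _ _
  have := h3 (by omega) (by omega)
  omega

/-- A corner (inner or outer) is a rim cell. -/
lemma corner_rim {lam : ℕ → ℕ} {v : Cell}
    (hv : IsInnerCorner lam v ∨ IsOuterCorner lam v) : seC v ∉ cells lam := by
  rcases hv with hv | hv
  · exact hv.2.2.2
  · exact outer_rim hv

lemma corner_cell {lam : ℕ → ℕ} {v : Cell}
    (hv : IsInnerCorner lam v ∨ IsOuterCorner lam v) : v ∈ cells lam := by
  rcases hv with hv | hv
  · exact hv.1
  · exact hv.1

/-- A rim cell in region A has its east neighbour in the diagram. -/
lemma regionA_east {lam : ℕ → ℕ} (hlam : IsPartition lam) {u : Cell}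
    (hA : u ∈ regionA lam) (hru : seC u ∉ cells lam) : eC u ∈ cells lam := by
  obtain ⟨hu, hnc, hall⟩ := hA
  by_contra he
  by_cases hs : sC u ∈ cells lam
  · -- vertical edge case: find outer corner below with no inner corner between
    rw [mem_cells_iff] at hu
    rw [cells_s] at hs
    rw [cells_e] at he
    rw [cells_se] at hru
    push_neg at he hru
    have hlami : lam u.1 = u.2 := by
      have := he hu.1 (by omega)
      omega
    have hlami1 : lam (u.1 + 1) = u.2 := by
      have h1 := lam_anti hlam (Nat.le_succ u.1)
      have h2 := hru (by omega) (by omega)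
      omega
    -- find the last row of the column u.2
    obtain ⟨N, hN⟩ := hlam.2
    have hex : ∃ k, lam (u.1 + 1 + k) < u.2 := by
      refine ⟨N, ?_⟩
      have := hN (u.1 + 1 + N) (by omega)
      omega
    classical
    obtain ⟨m, hmge, hmlt⟩ : ∃ m, (∀ k < m, u.2 ≤ lam (u.1 + 1 + k)) ∧
        lam (u.1 + 1 + m) < u.2 :=
      ⟨Nat.find hex, fun k hk => le_of_not_gt (Nat.find_min hex hk), Nat.find_spec hex⟩
    obtain _ | m' := m
    · rw [Nat.add_zero] at hmlt
      omega
    set i' : ℕ := u.1 + 1 + m' with hi'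
    have hmprev : u.2 ≤ lam i' := hmge m' (Nat.lt_succ_self m')
    have hmlt' : lam (i' + 1) < u.2 := by
      have h : u.1 + 1 + (m' + 1) = i' + 1 := by omega
      rwa [h] at hmlt
    have hlami' : lam i' = u.2 := by
      have h1 := lam_anti hlam (show u.1 + 1 ≤ i' by omega)
      omega
    -- w = (i', u.2) is an outer corner
    have hw : IsOuterCorner lam (i', u.2) := by
      refine ⟨?_, ?_, ?_⟩
      · rw [mem_cells_mk]; omega
      · rw [cells_e_mk]; push_neg; intro _ _; omega
      · rw [cells_s_mk]; push_neg; intro _ _; omega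
    have hcw : content (i', u.2) < content u := by
      rw [content_mk, content_eq]; omega
    obtain ⟨v, hvinner, hv1, hv2⟩ := hall _ hw hcw
    -- v is a rim cell with content strictly between; it must be (b, u.2) for some u.1 < b < i'
    have hvc := hvinner.1
    have hvrim := hvinner.2.2.2
    rw [content_mk] at hv1
    rw [content_eq] at hv1 hv2
    rw [content_eq] at hv2
    have hvcells := hvc
    rw [mem_cells_iff] at hvcells
    obtain ⟨b, hbz⟩ : ∃ b : ℕ, (b : ℤ) = (u.2 : ℤ) - ((v.2 : ℤ) - (v.1 : ℤ)) :=
      ⟨((u.2 : ℤ) - ((v.2 : ℤ) - (v.1 : ℤ))).toNat, Int.toNat_of_nonneg (by omega)⟩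
    have hbi : u.1 < b := by omega
    have hbi' : b < i' := by omega
    -- the cell c = (b, u.2) is a rim cell on v's diagonal
    have hc : ((b, u.2) : Cell) ∈ cells lam := by
      rw [mem_cells_mk]
      have := lam_anti hlam (show b ≤ i' by omega)
      exact ⟨by omega, by omega, by omega⟩
    have hcr : seC (b, u.2) ∉ cells lam := by
      rw [cells_se_mk]
      push_neg
      intro _ _
      have := lam_anti hlam (show u.1 + 1 ≤ b + 1 by omega)
      omega
    have heq : v = (b, u.2) := by
      apply rim_unique hlam hc hcr hvc hvrim
      rw [content_eq, content_mk]
      omega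
    -- but then eC v ∉ cells, contradicting that v is an inner corner
    have hvE := hvinner.2.1
    rw [heq, cells_e_mk] at hvE
    have hb1 : lam b ≤ lam (u.1 + 1) := lam_anti hlam (by omega)
    omega
  · -- u is an outer corner: content u is a corner content
    exact hnc ⟨u, Or.inr ⟨hu, he, hs⟩, rfl⟩

/-- A rim cell in region B has its south neighbour in the diagram. -/
lemma regionB_south {lam : ℕ → ℕ} (hlam : IsPartition lam) {u : Cell}
    (hB : u ∈ regionB lam) (hru : seC u ∉ cells lam) : sC u ∈ cells lam := by
  obtain ⟨hu, hnot⟩ := hB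
  simp only [Set.mem_union, not_or] at hnot
  obtain ⟨⟨hnI, hnO⟩, hnA⟩ := hnot
  by_contra hs
  by_cases he : eC u ∈ cells lam
  swap
  · -- u is an outer corner, so u ∈ regionO
    exact hnO ⟨hu, u, ⟨hu, he, hs⟩, rfl⟩
  · -- horizontal edge case: show u ∈ regionA
    apply hnA
    refine ⟨hu, ?_, ?_⟩
    · -- content u is not a corner content
      rintro ⟨v, hv, hcv⟩
      have heq := rim_unique hlam hu hru (corner_cell hv) (corner_rim hv) hcv
      rcases hv with hv | hv
      · exact hnI ⟨hu, v, hv, hcv⟩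
      · exact hnO ⟨hu, v, hv, hcv⟩
    · -- every outer corner below has an inner corner strictly between
      intro w hw hcw
      rw [mem_cells_iff] at hu
      rw [cells_s] at hs
      rw [cells_e] at he
      push_neg at hs
      have hsu : lam (u.1 + 1) < u.2 := by
        have := hs (by omega) (by omega)
        omega
      have heu : u.2 + 1 ≤ lam u.1 := he.2.2
      -- key claim: w has content < lam (u.1+1) - u.1
      have hkey : content w < (lam (u.1 + 1) : ℤ) - u.1 := by
        by_contra hge
        push_neg at hge
        -- then w would be a rim cell (u.1, b) with lam(u.1+1) ≤ b ≤ u.2 - 1, but eC w ∈ cells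
        have hcwc := hw.1
        rw [mem_cells_iff] at hcwc
        rw [content_eq] at hcw hge
        rw [content_eq] at hcw
        obtain ⟨b, hbz⟩ : ∃ b : ℕ, (b : ℤ) = (w.2 : ℤ) - (w.1 : ℤ) + (u.1 : ℤ) :=
          ⟨((w.2 : ℤ) - (w.1 : ℤ) + (u.1 : ℤ)).toNat, Int.toNat_of_nonneg (by omega)⟩
        have hblam : lam (u.1 + 1) ≤ b := by omega
        have hbj : b < u.2 := by omega
        have hb1 : 1 ≤ b := by
          by_contra h0
          push_neg at h0
          have hw1 : u.1 + 1 ≤ w.1 := by omega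
          have := lam_anti hlam hw1
          omega
        have hbc : ((u.1, b) : Cell) ∈ cells lam := by
          rw [mem_cells_mk]
          exact ⟨by omega, by omega, by omega⟩
        have hbr : seC (u.1, b) ∉ cells lam := by
          rw [cells_se_mk]
          push_neg
          intro _ _
          omega
        have heqw : w = (u.1, b) := by
          apply rim_unique hlam hbc hbr hw.1 (outer_rim hw)
          rw [content_eq, content_mk]
          omega
        have hwE := hw.2.1
        rw [heqw, cells_e_mk] at hwE
        push_neg at hwE
        have := hwE (by omega) (by omega)
        omega
      -- now lam (u.1+1) ≥ 1, else no outer corner below exists at all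
      have hl1 : 1 ≤ lam (u.1 + 1) := by
        by_contra hl0
        push_neg at hl0
        have hcwc := hw.1
        rw [mem_cells_iff] at hcwc
        rw [content_eq] at hkey
        have hw1 : u.1 + 1 ≤ w.1 := by omega
        have := lam_anti hlam hw1
        omega
      -- v = (u.1, lam (u.1+1)) is an inner corner strictly between
      refine ⟨(u.1, lam (u.1 + 1)), ⟨?_, ?_, ?_, ?_⟩, ?_, ?_⟩
      · rw [mem_cells_mk]
        have := lam_anti hlam (Nat.le_succ u.1)
        exact ⟨by omega, by omega, by omega⟩
      · rw [cells_e_mk]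
        exact ⟨by omega, by omega, by omega⟩
      · rw [cells_s_mk]
        exact ⟨by omega, by omega, le_rfl⟩
      · rw [cells_se_mk]
        push_neg
        intro _ _
        omega
      · rwa [content_mk]
      · rw [content_mk, content_eq]
        omega

/-- Successor in a chain. -/
lemma chain'_next {α : Type*} {R : α → α → Prop} {d : α} :
    ∀ {l : List α}, List.Chain' R l → ∀ {u}, u ∈ l → u ≠ l.getLastD d →
      ∃ v ∈ l, R u v := by
  intro l
  induction l with
  | nil => intro _ u hu; exact absurd hu List.not_mem_nil
  | cons a t ih =>
    intro hc u hu hne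
    match t, hc, hu, hne, ih with
    | [], _, hu, hne, _ =>
      exfalso
      apply hne
      have : u = a := by simpa using hu
      simp [this]
    | b :: t', hc, hu, hne, ih =>
      have hR : R a b := (List.isChain_cons_cons.mp hc).1
      have hct : List.Chain' R (b :: t') := (List.isChain_cons_cons.mp hc).2
      rcases List.mem_cons.mp hu with rfl | hu'
      · exact ⟨b, by simp, hR⟩
      · have hne' : u ≠ (b :: t').getLastD d := by
          intro hcon
          apply hne
          rw [hcon]
          simp [List.getLastD_cons]
        obtain ⟨v, hv, hRv⟩ := ih hct hu' hne'
        exact ⟨v, by simp [hv], hRv⟩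

/-- Predecessor in a chain. -/
lemma chain'_prev {α : Type*} {R : α → α → Prop} {d : α} :
    ∀ {l : List α}, List.Chain' R l → ∀ {u}, u ∈ l → u ≠ l.headD d →
      ∃ w ∈ l, R w u := by
  intro l
  induction l with
  | nil => intro _ u hu; exact absurd hu List.not_mem_nil
  | cons a t ih =>
    intro hc u hu hne
    have hne' : u ≠ a := by simpa using hne
    have hu' : u ∈ t := by
      rcases List.mem_cons.mp hu with rfl | hu'
      · exact absurd rfl hne'
      · exact hu'
    match t, hc, hu', ih with
    | b :: t', hc, hu', ih =>
      have hR : R a b := (List.isChain_cons_cons.mp hc).1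
      have hct : List.Chain' R (b :: t') := (List.isChain_cons_cons.mp hc).2
      by_cases hub : u = b
      · exact ⟨a, by simp, hub ▸ hR⟩
      · have hne'' : u ≠ (b :: t').headD d := by simpa using hub
        obtain ⟨w, hw, hRw⟩ := ih hct hu' hne''
        exact ⟨w, by simp [hw], hRw⟩

/-- In a rim-hook, if the east neighbour of a cell is in the diagram, it is the next cell. -/
lemma rimhook_east {lam : ℕ → ℕ} {h : List Cell} (hh : IsRimHook lam h)
    {u : Cell} (hu : u ∈ h) (he : eC u ∈ cells lam) : eC u ∈ h := by
  obtain ⟨⟨hne, hcells, hchain⟩, hhd, hlst, hrim⟩ := hh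
  have hulst : u ≠ lst h := by
    intro hcon
    rw [← hcon] at hlst
    exact hlst he
  obtain ⟨v, hv, hRv⟩ := chain'_next (d := ((0, 0) : Cell)) hchain hu hulst
  rcases hRv with hvn | hve
  · exfalso
    -- v = nC u, but then seC v = eC u ∈ cells, contradiction
    have hvcell := hcells v hv
    rw [mem_cells_iff] at hvcell
    have hse : seC v = eC u := by
      rw [hvn] at hvcell ⊢
      simp only [seC, nC, eC] at hvcell ⊢
      have h2 : u.1 - 1 + 1 = u.1 := by omega
      rw [h2]
    exact hrim v hv (hse ▸ he)
  · rw [← hve]; exact hv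

/-- In a rim-hook, if the south neighbour of a cell is in the diagram,
it is the previous cell. -/
lemma rimhook_south {lam : ℕ → ℕ} {h : List Cell} (hh : IsRimHook lam h)
    {u : Cell} (hu : u ∈ h) (hs : sC u ∈ cells lam) : sC u ∈ h := by
  obtain ⟨⟨hne, hcells, hchain⟩, hhd, hlst, hrim⟩ := hh
  have huhd : u ≠ hd h := by
    intro hcon
    rw [← hcon] at hhd
    exact hhd hs
  obtain ⟨w, hw, hRw⟩ := chain'_prev (d := ((0, 0) : Cell)) hchain hu huhd
  rcases hRw with hwn | hwe
  · -- u = nC w, so w = sC u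
    have hwcell := hcells w hw
    rw [mem_cells_iff] at hwcell
    have hws : w = sC u := by
      rw [hwn]
      show w = (w.1 - 1 + 1, w.2)
      have h1 : 1 ≤ w.1 := hwcell.1
      have h2 : w.1 - 1 + 1 = w.1 := by omega
      rw [h2]
    rw [← hws]; exact hw
  · exfalso
    -- u = eC w, but then seC w = sC u ∈ cells, contradiction
    have hse : seC w = sC u := by
      rw [hwe]
      simp only [seC, eC, sC]
    exact hrim w hw (hse ▸ hs)

end Helpers

/-- If `u` is a cell of a rim-hook `h` with `u ∈ I ∪ A` then `e u ∈ h`;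
if `u ∈ B ∪ I` then `s u ∈ h`. -/
theorem rimHook_region_steps (lam : ℕ → ℕ) (hlam : IsPartition lam)
    (h : List Cell) (hh : IsRimHook lam h) (u : Cell) (hu : u ∈ h) :
    (u ∈ regionI lam ∪ regionA lam → eC u ∈ h) ∧
    (u ∈ regionB lam ∪ regionI lam → sC u ∈ h) := by
  have hucell : u ∈ cells lam := hh.1.2.1 u hu
  have hurim : seC u ∉ cells lam := hh.2.2.2 u hu
  constructor
  · rintro (hI | hA)
    · obtain ⟨_, v, hv, hcv⟩ := hI
      have heq := rim_unique hlam hucell hurim hv.1 hv.2.2.2 hcv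
      exact rimhook_east hh hu (heq ▸ hv.2.1)
    · exact rimhook_east hh hu (regionA_east hlam hA hurim)
  · rintro (hB | hI)
    · exact rimhook_south hh hu (regionB_south hlam hB hurim)
    · obtain ⟨_, v, hv, hcv⟩ := hI
      have heq := rim_unique hlam hucell hurim hv.1 hv.2.2.2 hcv
      exact rimhook_south hh hu (heq ▸ hv.2.2.1)
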